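/- The monoid homomorphism from the free monoid on two generators α, β to Γ sending α ↦ a and β ↦ b is injective; consequently Γ has exponential growth: the ball B(n) = {g ∈ Γ : g is a product of at most n elements of {a,b,a⁻¹,b⁻¹}} satisfies #B(n) ≥ 2^n for all n. -/
import Mathlib


namespace PinkGroup

mutual
  /-- forward action of the generator `a` -/
  def aF : List Bool → List Bool
    | [] => []
    | false :: w => true :: bF w
    | true :: w => false :: w
  /-- forward action of the generator `b` -/
  def bF : List Bool → List Bool
    | [] => []
    | false :: w => false :: aF w
    | true :: w => true :: w
end

mutual
  /-- inverse of `aF` -/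
  def aIF : List Bool → List Bool
    | [] => []
    | true :: w => false :: bIF w
    | false :: w => true :: w
  /-- inverse of `bF` -/
  def bIF : List Bool → List Bool
    | [] => []
    | false :: w => false :: aIF w
    | true :: w => true :: w
end

lemma inv_all (w : List Bool) :
    aF (aIF w) = w ∧ bF (bIF w) = w ∧ aIF (aF w) = w ∧ bIF (bF w) = w := by
  induction w with
  | nil => simp [aF, bF, aIF, bIF]
  | cons x w ih =>
    cases x <;>
      simp [aF, bF, aIF, bIF, ih.1, ih.2.1, ih.2.2.1, ih.2.2.2]

/-- The generator `a` of Pink's group: `(1w)^a = 2 w^b`, `(2w)^a = 1w`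
(where the letter `1` is `false` and the letter `2` is `true`). -/
def a : Equiv.Perm (List Bool) :=
  ⟨aF, aIF, fun w => (inv_all w).2.2.1, fun w => (inv_all w).1⟩

/-- The generator `b` of Pink's group: `(1w)^b = 1 w^a`, `(2w)^b = 2w`. -/
def b : Equiv.Perm (List Bool) :=
  ⟨bF, bIF, fun w => (inv_all w).2.2.2, fun w => (inv_all w).2.1⟩

/-- Pink's group `Γ`, the iterated monodromy group of `z^2 - 1`. -/
def Gam : Subgroup (Equiv.Perm (List Bool)) := Subgroup.closure {a, b}

lemma a_mem : a ∈ Gam := Subgroup.subset_closure (by simp)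

lemma b_mem : b ∈ Gam := Subgroup.subset_closure (by simp)


/-- The ball of radius `n` in `Γ` with respect to the generating set `{a, b, a⁻¹, b⁻¹}`. -/
def Ball (n : ℕ) : Set (Equiv.Perm (List Bool)) :=
  {g | g ∈ Gam ∧ ∃ l : List (Equiv.Perm (List Bool)),
    (∀ s ∈ l, s = a ∨ s = b ∨ s = a⁻¹ ∨ s = b⁻¹) ∧ l.length ≤ n ∧ l.prod = g}

/-! ### auxiliary development -/

/-- the generator corresponding to a letter -/
def gen (x : Bool) : Equiv.Perm (List Bool) := bif x then b else a

/-- the value of a positive word -/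
def psi (u : List Bool) : Equiv.Perm (List Bool) := (u.map gen).prod

/-- parity of the number of `a`s (= `false` letters) in a word -/
def eps : List Bool → Bool
  | [] => false
  | x :: u => xor (!x) (eps u)

/-- the section word of a positive word at first-level vertex `i` -/
def sec (i : Bool) : List Bool → List Bool
  | [] => []
  | x :: u => if eps u = i then (!x) :: sec i u else sec i u

lemma psi_nil : psi [] = 1 := rfl

lemma psi_cons (x : Bool) (u : List Bool) : psi (x :: u) = gen x * psi u := by
  simp [psi]

lemma gen_apply (x j : Bool) (w : List Bool) :
    gen x (j :: w) = (xor j (!x)) :: (if j then w else gen (!x) w) := by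
  cases x <;> cases j <;> simp [gen, a, b, aF, bF]

lemma gen_nil (x : Bool) : gen x [] = [] := by
  cases x <;> simp [gen, a, b, aF, bF]

lemma psi_nil_apply (u : List Bool) : psi u [] = [] := by
  induction u with
  | nil => rfl
  | cons x u ih => rw [psi_cons, Equiv.Perm.mul_apply, ih, gen_nil]

/-- the key recursion for the action of a positive word -/
lemma act (u : List Bool) (i : Bool) (w : List Bool) :
    psi u (i :: w) = (xor i (eps u)) :: psi (sec i u) w := by
  induction u generalizing w with
  | nil => simp [psi, eps, sec]
  | cons x u ih =>
    rw [psi_cons, Equiv.Perm.mul_apply, ih, gen_apply]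
    rcases h : eps u with _ | _ <;> rcases hi : i with _ | _ <;>
      simp_all [sec, eps, psi_cons]

lemma eps_of_eq {u v : List Bool} (h : psi u = psi v) : eps u = eps v := by
  have h1 := congrArg (fun p : Equiv.Perm (List Bool) => p [false]) h
  simp only [act, psi_nil_apply, Bool.false_xor] at h1
  exact List.head_eq_of_cons_eq h1

lemma sec_of_eq {u v : List Bool} (h : psi u = psi v) (i : Bool) :
    psi (sec i u) = psi (sec i v) := by
  apply Equiv.ext
  intro w
  have h1 := congrArg (fun p : Equiv.Perm (List Bool) => p (i :: w)) h
  simp only [act] at h1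
  exact List.tail_eq_of_cons_eq h1

lemma sec_len (u : List Bool) :
    (sec false u).length + (sec true u).length = u.length := by
  induction u with
  | nil => simp [sec]
  | cons x u ih =>
    rcases h : eps u with _ | _ <;> simp [sec, h] <;> omega

/-- the head invariant for sections of positive words -/
lemma eps_cons (x : Bool) (u : List Bool) : eps (x :: u) = xor (!x) (eps u) := rfl

lemma sec_cons (i x : Bool) (u : List Bool) :
    sec i (x :: u) = if eps u = i then (!x) :: sec i u else sec i u := rfl

/-- the head invariant for sections of positive words -/
lemma head_inv (u : List Bool) (hu : u ≠ []) :
    sec false u ≠ [] ∧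
    (eps u = true → (sec false u).head? = some true) ∧
    (eps u = false → sec true u = [] ∨ (sec true u).head? = some true) := by
  induction u with
  | nil => exact absurd rfl hu
  | cons x u ih =>
    by_cases hne : u = []
    · subst hne; cases x <;> simp [sec, eps]
    · have IH := ih hne
      rcases h : eps u with _ | _
      · -- deposit at side false
        have e1 : sec false (x :: u) = (!x) :: sec false u := by rw [sec_cons, if_pos h]
        have e2 : sec true (x :: u) = sec true u := by
          rw [sec_cons, if_neg (by simp [h])]
        have e3 : eps (x :: u) = !x := by rw [eps_cons, h]; simp
        cases x
        · refine ⟨by simp [e1], by simp [e1], ?_⟩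
          intro hc; rw [e3] at hc; simp at hc
        · refine ⟨by simp [e1], ?_, ?_⟩
          · intro hc; rw [e3] at hc; simp at hc
          · intro _; rw [e2]; exact IH.2.2 h
      · -- deposit at side true
        have e1 : sec true (x :: u) = (!x) :: sec true u := by rw [sec_cons, if_pos h]
        have e2 : sec false (x :: u) = sec false u := by
          rw [sec_cons, if_neg (by simp [h])]
        have e3 : eps (x :: u) = x := by rw [eps_cons, h]; simp
        cases x
        · refine ⟨by rw [e2]; exact IH.1, ?_, ?_⟩
          · intro hc; rw [e3] at hc; simp at hc
          · intro _; right; simp [e1]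
        · refine ⟨by rw [e2]; exact IH.1, ?_, ?_⟩
          · intro _; rw [e2]; exact IH.2.1 h
          · intro hc; rw [e3] at hc; simp at hc

lemma sec_true_nil_cons {x : Bool} {u : List Bool} (h : sec true (x :: u) = []) :
    eps u = false ∧ sec true u = [] := by
  rcases he : eps u with _ | _
  · simp [sec, he] at h; exact ⟨rfl, h⟩
  · simp [sec, he] at h

lemma sec_true_nil_map : ∀ u : List Bool, sec true u = [] → sec false u = u.map not := by
  intro u
  induction u with
  | nil => simp [sec]
  | cons x u ih =>
    intro h
    obtain ⟨h1, h2⟩ := sec_true_nil_cons h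
    simp [sec, h1, ih h2]

lemma two_step {x x' : Bool} {u : List Bool}
    (h1 : sec true (x :: x' :: u) = [])
    (h2 : sec true ((x :: x' :: u).map not) = []) : False := by
  obtain ⟨ha1, ha2⟩ := sec_true_nil_cons h1
  obtain ⟨hb1, _⟩ := sec_true_nil_cons ha2
  -- ha1 : eps (x' :: u) = false, hb1 : eps u = false
  have hx' : x' = true := by
    simp [eps, hb1] at ha1; simpa using ha1
  simp only [List.map_cons] at h2
  obtain ⟨hc1, hc2⟩ := sec_true_nil_cons h2
  obtain ⟨hd1, _⟩ := sec_true_nil_cons hc2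
  -- hc1 : eps ((!x') :: u.map not) = false, hd1 : eps (u.map not) = false
  simp [eps, hd1, hx'] at hc1

/-- nontriviality: no nonempty positive word represents the identity -/
lemma NT_aux : ∀ n : ℕ, ∀ u : List Bool, u.length ≤ n → psi u = 1 → u = [] := by
  intro n
  induction n with
  | zero => intro u hu _; exact List.length_eq_zero_iff.mp (Nat.le_zero.mp hu)
  | succ n ih =>
    intro u hu hpsi
    cases u with
    | nil => rfl
    | cons x u₀ =>
      exfalso
      set u : List Bool := x :: u₀ with hudef
      have hune : u ≠ [] := by simp [hudef]
      have heps : eps u = false := eps_of_eq (v := []) hpsi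
      have hsec : ∀ i, psi (sec i u) = 1 := fun i => sec_of_eq (v := []) hpsi i
      have hlen := sec_len u
      have hsf : sec false u ≠ [] := (head_inv u hune).1
      by_cases hb : sec true u = []
      · -- all deposits at side false; pass to the flipped word
        have hw : sec false u = u.map not := sec_true_nil_map u hb
        set w := u.map not with hwdef
        have hpw : psi w = 1 := by rw [← hw]; exact hsec false
        have hwne : w ≠ [] := by simp [hwdef, hudef]
        have hwlen : w.length = u.length := by simp [hwdef]
        have hsecw : ∀ i, psi (sec i w) = 1 := fun i => sec_of_eq (v := []) hpw i
        have hsfw : sec false w ≠ [] := (head_inv w hwne).1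
        by_cases hb2 : sec true w = []
        · -- impossible: two levels of one-sided deposits
          cases u₀ with
          | nil =>
            -- u = [x]
            have hx : x = true := by simpa [hudef, eps] using heps
            have h2 : eps w = false := eps_of_eq (v := []) hpw
            rw [hwdef, hudef, hx] at h2
            simp [eps] at h2
          | cons x' u₁ =>
            rw [hudef] at hb
            rw [hwdef, hudef] at hb2
            exact two_step hb hb2
        · -- both sections of w are nonempty: recurse
          have hlw := sec_len w
          have l1 : (sec false w).length ≤ n := by
            have h1 : 1 ≤ (sec true w).length := List.length_pos_iff.mpr hb2
            have h2 : u.length ≤ n + 1 := hu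
            omega
          exact hsfw (ih (sec false w) l1 (hsecw false))
      · -- both sections of u are nonempty: recurse
        have l1 : (sec false u).length ≤ n := by
          have h1 : 1 ≤ (sec true u).length := List.length_pos_iff.mpr hb
          have h2 : u.length ≤ n + 1 := hu
          omega
        exact hsf (ih (sec false u) l1 (hsec false))

lemma NT {u : List Bool} (h : psi u = 1) : u = [] := NT_aux u.length u le_rfl h

lemma sec_le_len (i : Bool) (u : List Bool) : (sec i u).length ≤ u.length := by
  have := sec_len u
  cases i <;> omega

/-- injectivity of `psi` on words of bounded total length -/
lemma inj_aux : ∀ n : ℕ, ∀ u v : List Bool,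
    u.length + v.length ≤ n → psi u = psi v → u = v := by
  intro n
  induction n with
  | zero =>
    intro u v h _
    have : u = [] := List.length_eq_zero_iff.mp (by omega)
    have : v = [] := List.length_eq_zero_iff.mp (by omega)
    simp_all
  | succ n ih =>
    intro u v hlen hpsi
    -- helper for the mixed-head case
    have key : ∀ u' v' : List Bool, u'.length + v'.length + 2 ≤ n + 1 →
        psi (false :: u') = psi (true :: v') → False := by
      intro u' v' hl hp
      have heps := eps_of_eq hp
      simp only [eps, Bool.not_false, Bool.not_true, Bool.true_xor, Bool.false_xor] at heps
      -- heps : !eps u' = eps v'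
      rcases hE : eps u' with _ | _
      · -- eps u' = false, eps v' = true
        have hEv : eps v' = true := by rw [hE] at heps; simpa using heps.symm
        have e1 : sec true (false :: u') = sec true u' := by simp [sec, hE]
        have e2 : sec true (true :: v') = false :: sec true v' := by simp [sec, hEv]
        have hs := sec_of_eq hp true
        rw [e1, e2] at hs
        have hword : sec true u' = false :: sec true v' := by
          apply ih _ _ _ hs
          have h1 := sec_le_len true u'
          have h2 := sec_le_len true v'
          simp only [List.length_cons]
          omega
        have hne : u' ≠ [] := by
          intro hc; rw [hc] at hword; simp [sec] at hword
        rcases (head_inv u' hne).2.2 hE with h | h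
        · rw [h] at hword; simp at hword
        · rw [hword] at h; simp at h
      · -- eps u' = true, eps v' = false
        have hEv : eps v' = false := by rw [hE] at heps; simpa using heps.symm
        have e1 : sec false (false :: u') = sec false u' := by simp [sec, hE]
        have e2 : sec false (true :: v') = false :: sec false v' := by simp [sec, hEv]
        have hs := sec_of_eq hp false
        rw [e1, e2] at hs
        have hword : sec false u' = false :: sec false v' := by
          apply ih _ _ _ hs
          have h1 := sec_le_len false u'
          have h2 := sec_le_len false v'
          simp only [List.length_cons]
          omega
        have hne : u' ≠ [] := by
          intro hc; rw [hc] at hword; simp [sec] at hword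
        have h := (head_inv u' hne).2.1 hE
        rw [hword] at h; simp at h
    rcases u with _ | ⟨x, u'⟩
    · exact (NT (u := v) hpsi.symm).symm
    rcases v with _ | ⟨y, v'⟩
    · exact NT hpsi
    by_cases hxy : x = y
    · subst hxy
      have : psi u' = psi v' := by
        rw [psi_cons, psi_cons] at hpsi
        exact mul_left_cancel hpsi
      have : u' = v' := by
        apply ih _ _ _ this
        simp only [List.length_cons] at hlen
        omega
      rw [this]
    · exfalso
      simp only [List.length_cons] at hlen
      cases x <;> cases y <;> simp_all
      · exact key u' v' (by omega) hpsi
      · exact key v' u' (by omega) hpsi.symm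

lemma psi_injective : Function.Injective psi := by
  intro u v h
  exact inj_aux (u.length + v.length) u v le_rfl h

/-- The monoid homomorphism from the free monoid on two generators to `Γ`
sending the generators to `a` and `b` is injective; consequently `Γ` has exponential
growth: `#B(n) ≥ 2^n`. -/
theorem Gam_free_submonoid_and_exponential_growth :
    Function.Injective ⇑(FreeMonoid.lift (fun x : Bool => bif x then b else a)) ∧
    ∀ n : ℕ, 2 ^ n ≤ (Ball n).ncard := by
  constructor
  · intro u v h
    have h' : psi (FreeMonoid.toList u) = psi (FreeMonoid.toList v) := by
      rw [FreeMonoid.lift_apply, FreeMonoid.lift_apply] at h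
      exact h
    have := psi_injective h'
    exact FreeMonoid.toList.injective this
  · intro n
    -- lower bound via injectivity
    classical
    set F : (Fin n → Bool) → Equiv.Perm (List Bool) := fun f => psi (List.ofFn f) with hF
    have hFinj : Function.Injective F :=
      fun f g h => List.ofFn_injective (psi_injective h)
    have hrange : Set.range F ⊆ Ball n := by
      rintro g ⟨f, rfl⟩
      refine ⟨?_, (List.ofFn f).map gen, ?_, by simp, rfl⟩
      · apply Subgroup.list_prod_mem
        intro x hx
        simp only [List.mem_map] at hx
        obtain ⟨y, _, rfl⟩ := hx
        cases y
        · exact a_mem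
        · exact b_mem
      · intro s hs
        simp only [List.mem_map] at hs
        obtain ⟨y, _, rfl⟩ := hs
        cases y
        · left; rfl
        · right; left; rfl
    -- Ball n is finite
    have hSfin : ({a, b, a⁻¹, b⁻¹} : Set (Equiv.Perm (List Bool))).Finite := by
      apply Set.Finite.insert; apply Set.Finite.insert; apply Set.Finite.insert
      exact Set.finite_singleton _
    have : Finite ({a, b, a⁻¹, b⁻¹} : Set (Equiv.Perm (List Bool))) := hSfin.to_subtype
    have hBfin : (Ball n).Finite := by
      apply Set.Finite.subset
        (Set.Finite.image
          (fun l : List ({a, b, a⁻¹, b⁻¹} : Set (Equiv.Perm (List Bool))) =>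
            (l.map Subtype.val).prod)
          (List.finite_length_le _ n))
      rintro g ⟨_, l, hl, hlen, rfl⟩
      refine ⟨l.attach.map (fun s => ⟨s.1, ?_⟩), ?_, ?_⟩
      · rcases hl s.1 s.2 with h | h | h | h <;> simp [h]
      · simpa using hlen
      · simp [List.map_map]
    -- conclude
    have hcard : (Set.range F).ncard = 2 ^ n := by
      rw [Set.ncard_eq_toFinset_card' , Set.toFinset_range]
      rw [Finset.card_image_of_injective _ hFinj]
      simp
    calc 2 ^ n = (Set.range F).ncard := hcard.symm
      _ ≤ (Ball n).ncard := Set.ncard_le_ncard hrange hBfin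

end PinkGroup
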